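/- For every natural number n ≥ 3, letting A_n := (n/2)·sin(2π/n) and A'_n := n·tan(π/n) be the areas of the inscribed and circumscribed regular n-gons of a unit circle, we have π < (2/3)·A'_n + (1/3)·A_n. -/

import Mathlib

open Real Set

lemma huygens_aux {x : ℝ} (hx : 0 < x) (hx2 : x < Real.pi / 2) :
    3 * x < 2 * Real.tan x + Real.sin x * Real.cos x := by
  set f : ℝ → ℝ := fun y => 2 * Real.tan y + Real.sin y * Real.cos y - 3 * y with hf
  have hcos : ∀ y ∈ Icc 0 x, 0 < Real.cos y := by
    intro y hy
    apply Real.cos_pos_of_mem_Ioo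
    constructor
    · linarith [hy.1, Real.pi_pos]
    · exact lt_of_le_of_lt hy.2 hx2
  have hcont : ContinuousOn f (Icc 0 x) := by
    apply ContinuousOn.sub
    apply ContinuousOn.add
    · exact (Real.continuousOn_tan.mono (fun y hy => (hcos y hy).ne')).const_smul (2:ℝ)
    · exact (Real.continuousOn_sin.mul Real.continuousOn_cos)
    · exact (continuous_const.mul continuous_id).continuousOn
  have hderiv : ∀ y ∈ Ioo 0 x, HasDerivAt f
      (2 * (1 / Real.cos y ^ 2) + (Real.cos y * Real.cos y + Real.sin y * (-Real.sin y)) - 3) y := by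
    intro y hy
    have hc : Real.cos y ≠ 0 := (hcos y ⟨hy.1.le, hy.2.le⟩).ne'
    exact (((Real.hasDerivAt_tan hc).const_mul 2).add
      ((Real.hasDerivAt_sin y).mul (Real.hasDerivAt_cos y))).sub
      (((hasDerivAt_id y).const_mul 3).congr_deriv (by ring))
  have hmono : StrictMonoOn f (Icc 0 x) := by
    apply strictMonoOn_of_deriv_pos (convex_Icc 0 x) hcont
    intro y hy
    rw [interior_Icc] at hy
    rw [(hderiv y hy).deriv]
    have hc : 0 < Real.cos y := hcos y ⟨hy.1.le, hy.2.le⟩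
    have hc1 : Real.cos y < 1 := by
      have := Real.cos_lt_cos_of_nonneg_of_le_pi (le_refl 0) (by linarith [Real.pi_gt_three, hy.2, hx2]) hy.1
      simpa using this
    have hs : Real.sin y ^ 2 = 1 - Real.cos y ^ 2 := Real.sin_sq y
    have key : 2 * (1 / Real.cos y ^ 2) + (Real.cos y * Real.cos y + Real.sin y * (-Real.sin y)) - 3
        = 2 * (1 - Real.cos y ^ 2) ^ 2 / Real.cos y ^ 2 := by
      field_simp
      nlinarith [hs]
    rw [key]
    have h1 : 0 < 1 - Real.cos y ^ 2 := by nlinarith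
    positivity
  have h0 : f 0 = 0 := by simp [hf]
  have := hmono (left_mem_Icc.2 hx.le) (right_mem_Icc.2 hx.le) hx
  rw [h0] at this
  simp only [hf] at this
  linarith

theorem huygens_area_estimate (n : ℕ) (hn : 3 ≤ n) :
    Real.pi <
      (2 / 3) * (n * Real.tan (Real.pi / n)) +
        (1 / 3) * ((n / 2 : ℝ) * Real.sin (2 * Real.pi / n)) := by
  have hn0 : (0:ℝ) < n := by positivity
  have hn3 : (3:ℝ) ≤ n := by exact_mod_cast hn
  set x := Real.pi / n with hx
  have hxpos : 0 < x := div_pos Real.pi_pos hn0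
  have hxlt : x < Real.pi / 2 := by
    rw [hx, div_lt_div_iff₀ hn0 two_pos]
    nlinarith [Real.pi_pos]
  have key := huygens_aux hxpos hxlt
  have h2x : 2 * Real.pi / n = 2 * x := by rw [hx]; ring
  rw [h2x, Real.sin_two_mul]
  have hpx : Real.pi = n * x := by rw [hx]; field_simp
  nlinarith [key]
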